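/- If a triangulation of a regular polygon by non-crossing diagonals is invariant under the rotation group Z_k (rotations by angles 2πi/k for i = 1, …, k−1) acting on the polygon with n = km sides (m ≥ 1, k ≥ 2), then k = 2 or k = 3. -/

import Mathlib

open Finset
open Fin.NatCast

/-- `c` lies strictly between `a` and `b` going counterclockwise around the `n`-gon. -/
def PolyBtw (n : ℕ) (a c b : Fin n) : Prop :=
  0 < (c - a).val ∧ (c - a).val < (b - a).val

/-- `e` is a diagonal of the convex `n`-gon: a pair of non-adjacent vertices. -/
def PolyIsDiag (n : ℕ) (e : Finset (Fin n)) : Prop :=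
  ∃ a b : Fin n, e = {a, b} ∧ 2 ≤ (b - a).val ∧ 2 ≤ (a - b).val

/-- Two chords of the `n`-gon cross (interiors of the chords intersect). -/
def PolyCross (n : ℕ) (e f : Finset (Fin n)) : Prop :=
  ∃ a b c d : Fin n, e = {a, b} ∧ f = {c, d} ∧ PolyBtw n a c b ∧ PolyBtw n b d a

/-- A triangulation of a convex `n`-gon by non-crossing diagonals, encoded as a
maximal family of pairwise non-crossing diagonals (such a family has `n - 3` members). -/
structure PolyTriangulation (n : ℕ) where
  diags : Finset (Finset (Fin n))
  isDiag : ∀ e ∈ diags, PolyIsDiag n e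
  noncross : ∀ e ∈ diags, ∀ f ∈ diags, e ≠ f → ¬ PolyCross n e f
  card_diags : diags.card = n - 3

/-- A non-crossing perfect matching of the `m` sides of an `m`-gon (sides indexed by
`Fin m`), i.e. a genus-zero pairwise gluing of the sides. -/
structure PolyNCMatching (m : ℕ) where
  pairs : Finset (Finset (Fin m))
  card_two : ∀ e ∈ pairs, e.card = 2
  disj : ∀ e ∈ pairs, ∀ f ∈ pairs, e ≠ f → Disjoint e f
  cover : ∀ i : Fin m, ∃ e ∈ pairs, i ∈ e
  noncross : ∀ e ∈ pairs, ∀ f ∈ pairs, e ≠ f → ¬ PolyCross m e f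

/-- The rotation map used in the proof: shift every vertex by `i*m`. -/
private def rotΦ (k m : ℕ) [NeZero (k * m)] (i : ℕ) (e : Finset (Fin (k * m))) :
    Finset (Fin (k * m)) :=
  e.image (· + ((i * m : ℕ) : Fin (k * m)))

/-- Orbit counting: a `k`-periodic fixed-point-free action on a closed finset gives
`k ∣ card`. -/
private lemma free_dvd {β : Type*} [DecidableEq β] (k : ℕ) (hk : 0 < k) (ϕ : ℕ → β → β)
    (h0 : ∀ x, ϕ 0 x = x)
    (hadd : ∀ i j x, ϕ (i + j) x = ϕ i (ϕ j x))
    (hper : ∀ x, ϕ k x = x) :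
    ∀ N (s : Finset β), s.card ≤ N →
      (∀ x ∈ s, ϕ 1 x ∈ s) →
      (∀ i, 0 < i → i < k → ∀ x ∈ s, ϕ i x ≠ x) →
      k ∣ s.card := by
  intro N
  induction N with
  | zero =>
    intro s hs _ _
    have : s.card = 0 := Nat.le_zero.mp hs
    simp [this]
  | succ N ih =>
    intro s hs hclosed hfree
    rcases s.eq_empty_or_nonempty with rfl | ⟨a, ha⟩
    · simp
    have hmem : ∀ i, ϕ i a ∈ s := by
      intro i
      induction i with
      | zero => rw [h0]; exact ha
      | succ i ihh =>
        have h1 : ϕ (i + 1) a = ϕ 1 (ϕ i a) := by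
          rw [Nat.add_comm]; exact hadd 1 i a
        rw [h1]; exact hclosed _ ihh
    set O : Finset β := (Finset.range k).image (fun i => ϕ i a) with hO
    have hOsub : O ⊆ s := by
      intro x hx
      simp only [hO, Finset.mem_image, Finset.mem_range] at hx
      obtain ⟨i, _, rfl⟩ := hx
      exact hmem i
    have hinj : Set.InjOn (fun i => ϕ i a) (Finset.range k) := by
      intro i hi j hj hij
      simp only [Finset.coe_range, Set.mem_Iio] at hi hj
      have hij' : ϕ i a = ϕ j a := hij
      by_contra hne
      rcases Nat.lt_or_ge i j with h | h
      · have h2 : ϕ (j - i) (ϕ i a) = ϕ i a := by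
          rw [← hadd, Nat.sub_add_cancel h.le, hij']
        exact hfree (j - i) (by omega) (by omega) _ (hmem i) h2
      · have hlt : j < i := by omega
        have h2 : ϕ (i - j) (ϕ j a) = ϕ j a := by
          rw [← hadd, Nat.sub_add_cancel hlt.le, ← hij']
        exact hfree (i - j) (by omega) (by omega) _ (hmem j) h2
    have hOcard : O.card = k := by
      rw [hO, Finset.card_image_of_injOn hinj, Finset.card_range]
    have horb : ∀ j, ϕ j a ∈ O := by
      intro j
      induction j using Nat.strong_induction_on with
      | _ j ihj =>
        rcases Nat.lt_or_ge j k with h | h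
        · exact Finset.mem_image_of_mem _ (Finset.mem_range.mpr h)
        · have h2 : ϕ j a = ϕ (j - k) a := by
            conv_lhs => rw [show j = (j - k) + k by omega]
            rw [hadd, hper]
          rw [h2]
          exact ihj (j - k) (by omega)
    have hcard : s.card = (s \ O).card + k := by
      have h1 : (s \ O).card = s.card - O.card := Finset.card_sdiff_of_subset hOsub
      have h2 : O.card ≤ s.card := Finset.card_le_card hOsub
      omega
    have hclosed' : ∀ x ∈ s \ O, ϕ 1 x ∈ s \ O := by
      intro x hx
      have hxs : x ∈ s := (Finset.mem_sdiff.mp hx).1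
      have hxO : x ∉ O := (Finset.mem_sdiff.mp hx).2
      refine Finset.mem_sdiff.mpr ⟨hclosed x hxs, ?_⟩
      intro hmemO
      simp only [hO, Finset.mem_image, Finset.mem_range] at hmemO
      obtain ⟨i, hi, hieq⟩ := hmemO
      have hieq' : ϕ i a = ϕ 1 x := hieq
      have hx2 : ϕ (k - 1 + i) a = x := by
        rw [hadd, hieq', ← hadd, Nat.sub_add_cancel hk, hper]
      exact hxO (hx2 ▸ horb (k - 1 + i))
    have hfree' : ∀ i, 0 < i → i < k → ∀ x ∈ s \ O, ϕ i x ≠ x := fun i h1 h2 x hx =>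
      hfree i h1 h2 x (Finset.mem_sdiff.mp hx).1
    have hdvd := ih (s \ O) (by omega) hclosed' hfree'
    rw [hcard]
    exact Nat.dvd_add hdvd dvd_rfl

/-- If a pair is fixed by adding a nonzero shift, the shift swaps its elements. -/
private lemma pair_shift_eq {n : ℕ} [NeZero n] {a b t : Fin n} (ht : t ≠ 0)
    (h : ({a + t, b + t} : Finset (Fin n)) = {a, b}) : a + t = b ∧ b + t = a := by
  have h1 : a + t ∈ ({a, b} : Finset (Fin n)) := by rw [← h]; simp
  have h2 : b + t ∈ ({a, b} : Finset (Fin n)) := by rw [← h]; simp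
  simp only [Finset.mem_insert, Finset.mem_singleton] at h1 h2
  rcases h1 with h1 | h1
  · exact absurd (add_eq_left.mp h1) ht
  · rcases h2 with h2 | h2
    · exact ⟨h1, h2⟩
    · exact absurd (add_eq_left.mp h2) ht
/-- If a triangulation of a regular `k*m`-gon is invariant under all rotations by
`2πi/k`, `i = 1, …, k-1` (rotation by `2πi/k` shifts every vertex index by `i*m`),
then `k = 2` or `k = 3`. -/
theorem symmetric_triangulation_two_or_three (k m : ℕ) (hk : 2 ≤ k) (hm : 1 ≤ m)
    (hn : 3 ≤ k * m) (T : PolyTriangulation (k * m))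
    (hsym : ∀ i : ℕ, 1 ≤ i → i < k →
      T.diags.image (fun e => e.image (· + (⟨(i * m) % (k * m), Nat.mod_lt _ (by omega)⟩ : Fin (k * m)))) = T.diags) :
    k = 2 ∨ k = 3 := by
  by_contra hcon
  push_neg at hcon
  have hk4 : 4 ≤ k := by omega
  haveI : NeZero (k * m) := ⟨by omega⟩
  -- basic facts about the shift function
  have h0 : ∀ x, rotΦ k m 0 x = x := by
    intro x; simp [rotΦ]
  have hadd : ∀ i j x, rotΦ k m (i + j) x = rotΦ k m i (rotΦ k m j x) := by
    intro i j x
    simp only [rotΦ, Finset.image_image]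
    congr 1
    funext y
    simp only [Function.comp]
    rw [add_assoc]
    congr 1
    rw [add_mul, Nat.cast_add]
    exact add_comm _ _
  have hper : ∀ x, rotΦ k m k x = x := by
    intro x
    simp [rotΦ, Fin.natCast_self]
  have hclosed : ∀ x ∈ T.diags, rotΦ k m 1 x ∈ T.diags := by
    intro x hx
    have h1 := hsym 1 le_rfl (by omega)
    have h2 : rotΦ k m 1 x
        = x.image (· + (⟨(1 * m) % (k * m), Nat.mod_lt _ (by omega)⟩ : Fin (k * m))) := by
      have helt : ((1 * m : ℕ) : Fin (k * m))
          = (⟨(1 * m) % (k * m), Nat.mod_lt _ (by omega)⟩ : Fin (k * m)) := by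
        apply Fin.ext
        rw [Fin.val_natCast]
      simp only [rotΦ, helt]
    rw [← h1, h2]
    exact Finset.mem_image_of_mem _ hx
  -- key fixed-point computation
  have hpairimg : ∀ (i : ℕ) (a b : Fin (k * m)),
      rotΦ k m i {a, b} = {a + ((i * m : ℕ) : Fin (k * m)), b + ((i * m : ℕ) : Fin (k * m))} := by
    intro i a b
    simp [rotΦ]
  have hvalcast : ∀ i : ℕ, i < k → (((i * m : ℕ) : Fin (k * m))).val = i * m := by
    intro i hik
    rw [Fin.val_natCast, Nat.mod_eq_of_lt]
    exact Nat.mul_lt_mul_of_lt_of_le hik le_rfl (by omega)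
  have hfree : ∀ i, 0 < i → i < k → ∀ e ∈ T.diags, rotΦ k m i e ≠ e := by
    intro i hi0 hik e he heq
    obtain ⟨a, b, hab, h2ba, h2ab⟩ := T.isDiag e he
    set t : Fin (k * m) := ((i * m : ℕ) : Fin (k * m)) with ht
    have htval : t.val = i * m := hvalcast i hik
    have htne : t ≠ 0 := by
      intro h
      rw [h] at htval
      simp only [Fin.val_zero] at htval
      have : 0 < i * m := Nat.mul_pos hi0 (by omega)
      omega
    rw [hab, hpairimg, ← ht] at heq
    obtain ⟨hat, hbt⟩ := pair_shift_eq htne heq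
    have htt : t + t = 0 := by
      have h1 : a + (t + t) = a := by rw [← add_assoc, hat, hbt]
      exact add_eq_left.mp h1
    have hdvd2 : (k * m) ∣ (i * m + i * m) := by
      have h1 : (t + t).val = 0 := by rw [htt, Fin.val_zero]
      rw [Fin.val_add, htval] at h1
      exact Nat.dvd_of_mod_eq_zero h1
    have him : i * m < k * m := Nat.mul_lt_mul_of_lt_of_le hik le_rfl (by omega)
    have h2im : i * m + i * m = k * m := by
      have h1 : 0 < i * m := Nat.mul_pos hi0 (by omega)
      exact Nat.eq_of_dvd_of_lt_two_mul (by omega) hdvd2 (by omega)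
    have hk2i : k = 2 * i := by
      have h1 : (i + i) * m = (2 * i) * m := by ring
      have h2 : (2 * i) * m = k * m := by rw [← h1, add_mul]; omega
      have := Nat.eq_of_mul_eq_mul_right (show 0 < m by omega) h2
      omega
    have hi2 : 2 ≤ i := by omega
    -- now rotate once: the image diagonal is a distinct diameter, and crosses e
    set c : Fin (k * m) := ((1 * m : ℕ) : Fin (k * m)) with hc
    have hcval : c.val = m := by
      have := hvalcast 1 (by omega)
      rw [← hc] at this
      omega
    have hcne : c ≠ 0 := by
      intro h
      rw [h, Fin.val_zero] at hcval
      omega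
    have hf : rotΦ k m 1 e ∈ T.diags := hclosed e he
    have hfpair : rotΦ k m 1 e = {a + c, b + c} := by rw [hab, hpairimg, ← hc]
    have hfne : rotΦ k m 1 e ≠ e := by
      rw [hfpair, hab]
      intro hfeq
      obtain ⟨hac, hbc⟩ := pair_shift_eq hcne hfeq
      have hcc : c + c = 0 := by
        have h1 : a + (c + c) = a := by rw [← add_assoc, hac, hbc]
        exact add_eq_left.mp h1
      have h1 : (c + c).val = 0 := by rw [hcc, Fin.val_zero]
      rw [Fin.val_add, hcval] at h1
      have h2 : (k * m) ∣ (m + m) := Nat.dvd_of_mod_eq_zero h1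
      have h3 : k * m ≤ m + m := Nat.le_of_dvd (by omega) h2
      have h4 : 4 * m ≤ k * m := Nat.mul_le_mul_right m hk4
      omega
    -- the two diagonals cross
    have hcross : PolyCross (k * m) e (rotΦ k m 1 e) := by
      refine ⟨a, b, a + c, b + c, hab, hfpair, ?_, ?_⟩
      · constructor
        · rw [add_sub_cancel_left, hcval]; omega
        · rw [add_sub_cancel_left, hcval, ← hat, add_sub_cancel_left, htval]
          have : 2 * m ≤ i * m := Nat.mul_le_mul_right m hi2
          omega
      · constructor
        · rw [add_sub_cancel_left, hcval]; omega
        · rw [add_sub_cancel_left, hcval, ← hbt, add_sub_cancel_left, htval]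
          have : 2 * m ≤ i * m := Nat.mul_le_mul_right m hi2
          omega
    exact T.noncross e he (rotΦ k m 1 e) hf (Ne.symm hfne) hcross
  -- orbit counting
  have hdvd := free_dvd k (by omega) (rotΦ k m) h0 hadd hper T.diags.card T.diags le_rfl
    hclosed hfree
  rw [T.card_diags] at hdvd
  have h3 : k ∣ 3 := by
    have h1 : k ∣ k * m := dvd_mul_right k m
    have h2 := Nat.dvd_sub h1 hdvd
    rwa [Nat.sub_sub_self hn] at h2
  have := Nat.le_of_dvd (by norm_num) h3
  omega
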